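/- A non-trivial finite-index subgroup is never highly core-free: if Σ < H is a subgroup of finite index with Σ ≠ {1}, then Σ is not highly core-free. -/
import Mathlib


/-- The set ΣF = {σf : σ ∈ Σ, f ∈ F}. -/
def cosetProd {H : Type*} [Group H] (A : Subgroup H) (F : Set H) : Set H :=
  {h | ∃ σ ∈ A, ∃ f ∈ F, h = σ * f}

/-- A subgroup `A ≤ H` is highly core-free if for every finite `F ⊆ H`, every `n ≥ 1`
and all nonempty `S₁, …, Sₙ ⊆ H` covering `H \ ΣF`, some `Sₖ` has trivial core
`⋂_{h ∈ Sₖ} h⁻¹ A h = {1}`. -/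
def HighlyCoreFree {H : Type*} [Group H] (A : Subgroup H) : Prop :=
  ∀ F : Set H, F.Finite → ∀ n : ℕ, 1 ≤ n → ∀ S : Fin n → Set H,
    (∀ k, (S k).Nonempty) → (∀ h : H, h ∉ cosetProd A F → ∃ k, h ∈ S k) →
    ∃ k, ∀ x : H, (∀ h ∈ S k, h * x * h⁻¹ ∈ A) → x = 1

/-- A non-trivial finite-index subgroup is never highly core-free. -/
theorem finiteIndex_not_hcf {H : Type*} [Group H] (A : Subgroup H)
    (hne : A ≠ ⊥) (hfi : A.FiniteIndex) : ¬ HighlyCoreFree A := by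
  intro hcf
  haveI : Finite (H ⧸ A) := A.finite_quotient_of_finiteIndex
  set F : Set H := Set.range (fun q : H ⧸ A => (Quotient.out q)⁻¹) with hF
  have hFfin : F.Finite := Set.finite_range _
  have hcover : ∀ h : H, h ∈ cosetProd A F := by
    intro h
    refine ⟨h * Quotient.out ((h⁻¹ : H) : H ⧸ A), ?_, (Quotient.out ((h⁻¹ : H) : H ⧸ A))⁻¹,
      ⟨_, rfl⟩, by group⟩
    have := QuotientGroup.mk_out_eq_mul A (h⁻¹ : H)
    obtain ⟨a, ha⟩ := this
    rw [ha]
    simpa [mul_assoc] using a.2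
  obtain ⟨k, hk⟩ := hcf F hFfin 1 le_rfl (fun _ => {1}) (fun _ => ⟨1, rfl⟩)
    (fun h hh => absurd (hcover h) hh)
  apply hne
  rw [Subgroup.eq_bot_iff_forall]
  intro x hx
  exact hk x (by rintro h rfl; simpa using hx)
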